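/- For all A_1,A_2∈MU(R), B∈BIMU(R) and every nonempty sequence w over G×H, gaxit(A_1,A_2)(B)(w) = Σ_{t≥1} Σ B(⌈a_1⌉x_1⌈c_1⌉⋯⌈a_t⌉x_t⌈c_t⌉)·∏_{j=1}^{t} A_1(a_j⌊x_j⌋)·A_2(⌊x_j⌋c_j), where the inner sum runs over all factorizations w=a_1x_1c_1⋯a_tx_tc_t into consecutive blocks in which each x_j is a single letter of w and the blocks a_j,c_j are allowed to be empty. -/

import Mathlib

namespace Flexion

variable {R : Type*} [CommRing R] [Algebra ℚ R]
variable {G H : Type*} [AddCommGroup G] [AddCommGroup H]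

/-- A bimould over `R` with letters in `G × H`, given by its values on all
finite sequences of letters. -/
abbrev Mould (R G H : Type*) := List (G × H) → R

/-- The unit bimould `1`: value `1` on the empty sequence, `0` elsewhere. -/
def muOne : Mould R G H := fun w => match w with | [] => 1 | _ => 0

/-- The uninflected product `mmu`. -/
def mmu (A B : Mould R G H) : Mould R G H := fun w =>
  ∑ i ∈ Finset.range (w.length + 1), A (w.take i) * B (w.drop i)

/-- `n`-fold `mmu`-power. -/
def mmuPow (A : Mould R G H) : ℕ → Mould R G H
  | 0 => muOne
  | n + 1 => mmu A (mmuPow A n)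

/-- The operator `neg`. -/
def neg (A : Mould R G H) : Mould R G H := fun w => A (w.map fun p => (-p.1, -p.2))

/-- The operator `anti`. -/
def anti (A : Mould R G H) : Mould R G H := fun w => A w.reverse

/-- The operator `pari`. -/
def pari (A : Mould R G H) : Mould R G H := fun w => (-1 : R) ^ w.length * A w

/-- The operator `mantar`; note `(-1)^(r-1) = -(-1)^r`. -/
def mantar (A : Mould R G H) : Mould R G H := fun w => -((-1 : R) ^ w.length * A w.reverse)

/-- The `v`-component of the last letter (0 for the empty sequence). -/
def lastV : List (G × H) → H
  | [] => 0
  | [p] => p.2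
  | _ :: p :: ps => lastV (p :: ps)

/-- The `v`-component of the first letter (0 for the empty sequence). -/
def headV : List (G × H) → H
  | [] => 0
  | p :: _ => p.2

/-- Sum of the `u`-components. -/
def uSum (w : List (G × H)) : G := (w.map Prod.fst).sum

/-- The operator `push`. -/
def push (A : Mould R G H) : Mould R G H := fun w =>
  match w with
  | [] => A []
  | x :: xs =>
      A ((-uSum (x :: xs), -lastV (x :: xs)) ::
          ((x :: xs).dropLast.map fun p => (p.1, p.2 - lastV (x :: xs))))

/-- The operator `swap`. -/
def swap (A : Mould R G H) : Mould R H G := fun w =>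
  A (List.ofFn fun j : Fin w.length =>
      (headV (w.drop (w.length - 1 - (j : ℕ))) - headV (w.drop (w.length - (j : ℕ))),
       uSum (w.take (w.length - (j : ℕ)))))

/-- Auxiliary fuelled definition of the `mmu`-inverse. -/
def invmuAux (A : Mould R G H) : ℕ → Mould R G H
  | 0 => fun w => match w with | [] => 1 | _ => 0
  | n + 1 => fun w =>
      match w with
      | [] => 1
      | x :: xs =>
          -∑ i ∈ Finset.range (xs.length + 1),
            A ((x :: xs).take (i + 1)) * invmuAux A n (xs.drop i)

/-- The `mmu`-inverse of a bimould of `MU(R)` (value `1` at the empty sequence). -/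
def invmu (A : Mould R G H) : Mould R G H := fun w => invmuAux A w.length w

/-- `gantar := invmu ∘ pari ∘ anti`. -/
def gantar (A : Mould R G H) : Mould R G H := invmu (pari (anti A))

/-- The flexion marker `⌈a⌉b`. -/
def flexUL (a b : List (G × H)) : List (G × H) :=
  match b with
  | [] => []
  | p :: bs => (uSum a + p.1, p.2) :: bs

/-- The flexion marker `a⌈b⌉`. -/
def flexUR : List (G × H) → List (G × H) → List (G × H)
  | [], _ => []
  | [p], b => [(p.1 + uSum b, p.2)]
  | p :: q :: ps, b => p :: flexUR (q :: ps) b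

/-- The flexion marker `⌊a⌋b`. -/
def flexLL (a b : List (G × H)) : List (G × H) :=
  b.map fun p => (p.1, p.2 - lastV a)

/-- The flexion marker `a⌊b⌋`. -/
def flexLR (a b : List (G × H)) : List (G × H) :=
  a.map fun p => (p.1, p.2 - headV b)

/-- All factorizations `w = a₁b₁c₁⋯a_sb_sc_s` into (possibly empty) consecutive
blocks with every `b_i ≠ ∅` and `c_i a_{i+1} ≠ ∅` for `1 ≤ i ≤ s-1`; the flag
records whether the first block `a₁` may be empty. -/
def facs {α : Type*} : Bool → List α → List (List (List α × List α × List α))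
  | _, [] => [[]]
  | aFree, x :: xs =>
    (List.range ((x :: xs).length + 1)).flatMap fun i =>
      if i = 0 ∧ aFree = false then []
      else
        (List.range (((x :: xs).drop i).length)).flatMap fun j =>
          (List.range ((((x :: xs).drop i).drop (j + 1)).length + 1)).flatMap fun k =>
            (facs (!((((x :: xs).drop i).drop (j + 1)).take k).isEmpty)
                ((((x :: xs).drop i).drop (j + 1)).drop k)).map
              (fun L =>
                ((x :: xs).take i,
                 ((x :: xs).drop i).take (j + 1),
                 (((x :: xs).drop i).drop (j + 1)).take k) :: L)
  termination_by _ w => w.length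
  decreasing_by
    simp only [List.length_drop, List.length_cons]
    omega

/-- The block `⌈a⌉b⌈c⌉` attached to a factorization triple `(a, b, c)`. -/
def blockArg (t : List (G × H) × List (G × H) × List (G × H)) : List (G × H) :=
  flexUL t.1 (flexUR t.2.1 t.2.2)

/-- The operator `gaxit(A₁, A₂)`. -/
def gaxit (A₁ A₂ : Mould R G H) (B : Mould R G H) : Mould R G H := fun w =>
  match w with
  | [] => B []
  | x :: xs =>
      ((facs true (x :: xs)).map fun L =>
        B (L.flatMap blockArg) *
          (L.map fun t => A₁ (flexLR t.1 t.2.1) * A₂ (flexLL t.2.1 t.2.2)).prod).sum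

/-- `gamit(A) := gaxit(A, 1)`. -/
def gamit (A : Mould R G H) : Mould R G H → Mould R G H := gaxit A muOne

/-- `ganit(A) := gaxit(1, A)`. -/
def ganit (A : Mould R G H) : Mould R G H → Mould R G H := gaxit muOne A

/-- `garit(B) := gaxit(B, invmu(B))`. -/
def garit (B : Mould R G H) : Mould R G H → Mould R G H := gaxit B (invmu B)

/-- `gari(A, B) := mmu(garit(B)(A), B)`. -/
def gari (A B : Mould R G H) : Mould R G H := mmu (garit B A) B

/-- The `gari`-inverse (via choice; for `B ∈ MU(R)` it is the unique two-sided
`gari`-inverse of `B`). -/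
noncomputable def invgari (B : Mould R G H) : Mould R G H :=
  letI := Classical.propDecidable
  if h : ∃ C : Mould R G H, gari C B = muOne ∧ gari B C = muOne then h.choose else muOne

/-- `gani(A, B) := mmu(B, ganit(B)(A))`. -/
def gani (A B : Mould R G H) : Mould R G H := mmu B (ganit B A)

/-- The `gani`-inverse (via choice). -/
noncomputable def invgani (A : Mould R G H) : Mould R G H :=
  letI := Classical.propDecidable
  if h : ∃ C : Mould R G H, gani C A = muOne ∧ gani A C = muOne then h.choose else muOne

/-- The pair operation `gaxi`. -/
def gaxi (p q : Mould R G H × Mould R G H) : Mould R G H × Mould R G H :=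
  (mmu (gaxit q.1 q.2 p.1) q.1, mmu q.2 (gaxit q.1 q.2 p.2))

/-- The operator `amit(X)`. -/
def amit (X : Mould R G H) (B : Mould R G H) : Mould R G H := fun w =>
  ∑ i ∈ Finset.range (w.length + 1), ∑ j ∈ Finset.range (w.length + 1),
    if i < j ∧ j < w.length then
      X (w.take i ++ flexUL ((w.drop i).take (j - i)) (w.drop j)) *
        B (flexLR ((w.drop i).take (j - i)) (w.drop j))
    else 0

/-- The operator `anit(X)`. -/
def anit (X : Mould R G H) (B : Mould R G H) : Mould R G H := fun w =>
  ∑ i ∈ Finset.range (w.length + 1), ∑ j ∈ Finset.range (w.length + 1),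
    if 0 < i ∧ i < j then
      X (flexUR (w.take i) ((w.drop i).take (j - i)) ++ w.drop j) *
        B (flexLL (w.take i) ((w.drop i).take (j - i)))
    else 0

/-- `arit(X) := amit(X) - anit(X)`. -/
def arit (X : Mould R G H) (B : Mould R G H) : Mould R G H := fun w =>
  amit X B w - anit X B w

/-- `preari(A, B) := arit(B)(A) + mmu(A, B)`. -/
def preari (A B : Mould R G H) : Mould R G H := fun w => arit B A w + mmu A B w

/-- `ari(A, B) := preari(A, B) - preari(B, A)`. -/
def ari (A B : Mould R G H) : Mould R G H := fun w => preari A B w - preari B A w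

/-- Left-nested `preari`-powers: `preari(A, A, …, A)` (`n` arguments). -/
def preariPow (A : Mould R G H) : ℕ → Mould R G H
  | 0 => muOne
  | 1 => A
  | n + 2 => preari (preariPow A (n + 1)) A

/-- `expari(A) = 1 + Σ_{n≥1} preari(A,…,A)/n!`; the sum is computed pointwise,
using that the `n`-th term vanishes in lengths `< n`. -/
def expari (A : Mould R G H) : Mould R G H := fun w =>
  ∑ n ∈ Finset.range (w.length + 1), (n.factorial : ℚ)⁻¹ • preariPow A n w

/-- The bimoulds `fre_r`: `fre_1 := E`, `fre_{r+1} := arit(fre_r)(E)`. -/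
def fre (E : Mould R G H) : ℕ → Mould R G H
  | 0 => fun _ => 0
  | 1 => E
  | n + 2 => arit (fre E (n + 1)) E

/-- Flexion units. -/
structure IsFlexionUnit (E : Mould R G H) : Prop where
  empty : E [] = 0
  support : ∀ w : List (G × H), 2 ≤ w.length → E w = 0
  parity : ∀ (u : G) (v : H), E [(-u, -v)] = -E [(u, v)]
  tripartite : ∀ (u₁ u₂ : G) (v₁ v₂ : H),
    E [(u₁, v₁)] * E [(u₂, v₂)] =
      E [(u₁, v₁ - v₂)] * E [(u₁ + u₂, v₂)] + E [(u₁ + u₂, v₁)] * E [(u₂, v₂ - v₁)]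

/-- A bimould `M` is push-neutral if `(id + push + ⋯ + push^{∘r})(M)` vanishes
in each length `r`. -/
def PushNeutral (M : Mould R G H) : Prop :=
  ∀ w : List (G × H), ∑ i ∈ Finset.range (w.length + 1), push^[i] M w = 0

/-- `fez := invmu(1 - E)`. -/
def fez (E : Mould R G H) : Mould R G H := invmu (muOne - E)

/-- The bimould `fes`, by its explicit formula
`fes(u₁,…,u_r; v₁,…,v_r) = ∏ᵢ E(u₁+⋯+uᵢ; vᵢ − v_{i+1})` with `v_{r+1} := 0`. -/
def fesExpl (E : Mould R G H) : Mould R G H := fun w =>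
  ∏ i ∈ Finset.range w.length,
    E [(uSum (w.take (i + 1)), headV (w.drop i) - headV (w.drop (i + 1)))]

/-- All shuffles of two sequences (with multiplicity). -/
def shuffles {α : Type*} : List α → List α → List (List α)
  | [], w => [w]
  | x :: xs, [] => [x :: xs]
  | x :: xs, y :: ys =>
      ((shuffles xs (y :: ys)).map (x :: ·)) ++ ((shuffles (x :: xs) ys).map (y :: ·))
  termination_by a b => a.length + b.length
  decreasing_by
    · simp only [List.length_cons]; omega
    · simp only [List.length_cons]; omega

/-- Symmetrality. -/
def Symmetral (A : Mould R G H) : Prop :=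
  ∀ w w' : List (G × H), w ≠ [] → w' ≠ [] →
    ((shuffles w w').map A).sum = A w * A w'

/-- Alternality. -/
def Alternal (A : Mould R G H) : Prop :=
  ∀ w w' : List (G × H), w ≠ [] → w' ≠ [] →
    ((shuffles w w').map A).sum = 0

/-- `gepar(A) := mmu(anti(swap(A)), swap(A))`. -/
def gepar (A : Mould R G H) : Mould R H G := mmu (anti (swap A)) (swap A)

/-- `der`: multiplication by the length. -/
def der (A : Mould R G H) : Mould R G H := fun w => (w.length : R) * A w

/-- `slash(A) := gari(neg(A), invgari(A))`. -/
noncomputable def slash (A : Mould R G H) : Mould R G H := gari (neg A) (invgari A)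

/-- `crash(B) := mmu((push∘swap∘invmu∘invgari∘swap)(B), (swap∘invgari∘swap)(B))`. -/
noncomputable def crash (B : Mould R G H) : Mould R G H :=
  mmu (push (swap (invmu (invgari (swap B))))) (swap (invgari (swap B)))

/-- Formal derivative of a power series. -/
noncomputable def psDeriv (g : PowerSeries R) : PowerSeries R :=
  PowerSeries.mk fun m => ((m + 1 : ℕ) : R) * PowerSeries.coeff (m + 1) g

/-- `f_*(x) = Σ_{r≥1} ε_r x^{r+1}`. -/
noncomputable def fstarPS (ε : ℕ → R) : PowerSeries R :=
  PowerSeries.mk fun m => if 2 ≤ m then ε (m - 1) else 0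

/-- `exp(f_*(x) d/dx)(x)`, computed coefficientwise (only finitely many terms
contribute to each coefficient, since `f_* ∈ x²R[[x]]`). -/
noncomputable def expDX (ε : ℕ → R) : PowerSeries R :=
  PowerSeries.mk fun m =>
    ∑ n ∈ Finset.range (m + 1),
      (n.factorial : ℚ)⁻¹ •
        PowerSeries.coeff m ((fun g => fstarPS ε * psDeriv g)^[n] PowerSeries.X)

/-- `ε` is the family of coefficients of the infinitesimal generator of
`f ∈ GIFF_x(R)`. -/
noncomputable def IsGenerator (ε : ℕ → R) (f : PowerSeries R) : Prop :=
  expDX ε = f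

/-- The mould `Σ_{r≥1} ε_r · fre_r` associated to a flexion unit `E` and a
coefficient family `ε`. -/
def freSum (E : Mould R G H) (ε : ℕ → R) : Mould R G H :=
  fun w => ε w.length * fre E w.length w

/-- `Se(f) := expari(Σ_{r≥1} ε_r^f · fre_r)` where `ε^f` is the family of
coefficients of the infinitesimal generator of `f`. -/
def SeGen (E : Mould R G H) (ε : ℕ → R) : Mould R G H := expari (freSum E ε)

/-- The power series `re(x) = 1 - exp(-x)`. -/
noncomputable def rePS (R : Type*) [CommRing R] [Algebra ℚ R] : PowerSeries R :=
  PowerSeries.mk fun m =>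
    if m = 0 then 0 else algebraMap ℚ R ((-1 : ℚ) ^ (m + 1) / m.factorial)


/-- All factorizations `w = a₁x₁c₁⋯a_tx_tc_t` into consecutive blocks in which
every `x_j` is a single letter and the blocks `a_j, c_j` may be empty. -/
def sfacs {α : Type*} : List α → List (List (List α × α × List α))
  | [] => [[]]
  | x :: xs =>
      (List.range (xs.length + 1)).flatMap fun i =>
        (List.range (((x :: xs).drop (i + 1)).length + 1)).flatMap fun k =>
          (sfacs (((x :: xs).drop (i + 1)).drop k)).map fun L =>
            ((x :: xs).take i, (x :: xs).getD i x, ((x :: xs).drop (i + 1)).take k) :: L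
  termination_by w => w.length
  decreasing_by
    simp only [List.length_drop, List.length_cons]
    omega

/-- The inverse of a bijection of `BIMU(R)`. -/
noncomputable def minv (g : Mould R G H → Mould R G H) : Mould R G H → Mould R G H :=
  @Function.invFun (Mould R G H) (Mould R G H) ⟨fun _ => 0⟩ g

/-- Membership of a pair of bimoulds in `MU(R) × MU(R)`. -/
def MUpair (p : Mould R G H × Mould R G H) : Prop := p.1 [] = 1 ∧ p.2 [] = 1
set_option linter.unusedSectionVars false
/-! ### Auxiliary machinery for `gaxit_simple` -/

private lemma sum_map_flatMap {α β : Type*} (l : List α) (f : α → List β) (g : β → R) :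
    ((l.flatMap f).map g).sum = (l.map fun a => ((f a).map g).sum).sum := by
  induction l with
  | nil => simp
  | cons x xs ih => simp [ih]

private lemma listSum_range (n : ℕ) (f : ℕ → R) :
    ((List.range n).map f).sum = ∑ i ∈ Finset.range n, f i := rfl

private lemma lastV_cons_ne (y : G × H) {l : List (G × H)} (h : l ≠ []) :
    lastV (y :: l) = lastV l := by
  cases l with
  | nil => exact absurd rfl h
  | cons p ps => rfl

private lemma flexUR_cons_ne (y : G × H) (c : List (G × H)) {l : List (G × H)} (h : l ≠ []) :
    flexUR (y :: l) c = y :: flexUR l c := by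
  cases l with
  | nil => exact absurd rfl h
  | cons p ps => rfl

/-- The facs-side coefficient. -/
private def coeffF (A₁ A₂ : Mould R G H) (t : List (G × H) × List (G × H) × List (G × H)) : R :=
  A₁ (flexLR t.1 t.2.1) * A₂ (flexLL t.2.1 t.2.2)

private def VF (A₁ A₂ : Mould R G H) (Φ : Mould R G H)
    (L : List (List (G × H) × List (G × H) × List (G × H))) : R :=
  Φ (L.flatMap blockArg) * (L.map (coeffF A₁ A₂)).prod

private def Fsum (A₁ A₂ : Mould R G H) (f : Bool) (Φ : Mould R G H) (w : List (G × H)) : R :=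
  ((facs f w).map (VF A₁ A₂ Φ)).sum

/-- The single letter contributed to the argument of `B` by an `sfacs` triple. -/
private def letterArg (t : List (G × H) × (G × H) × List (G × H)) : G × H :=
  (uSum t.1 + t.2.1.1 + uSum t.2.2, t.2.1.2)

private def coeffS (A₁ A₂ : Mould R G H) (t : List (G × H) × (G × H) × List (G × H)) : R :=
  A₁ (t.1.map fun p => (p.1, p.2 - t.2.1.2)) * A₂ (t.2.2.map fun p => (p.1, p.2 - t.2.1.2))

private def VS (A₁ A₂ : Mould R G H) (Φ : Mould R G H)
    (L : List (List (G × H) × (G × H) × List (G × H))) : R :=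
  Φ (L.map letterArg) * (L.map (coeffS A₁ A₂)).prod

private def okHead {α : Type*} : List (List α × α × List α) → Bool
  | [] => true
  | t :: _ => !t.1.isEmpty

private def Ssum (A₁ A₂ : Mould R G H) (Φ : Mould R G H) (w : List (G × H)) : R :=
  ((sfacs w).map (VS A₁ A₂ Φ)).sum

private def SsumT (A₁ A₂ : Mould R G H) (Φ : Mould R G H) (w : List (G × H)) : R :=
  ((sfacs w).map fun L => if okHead L then VS A₁ A₂ Φ L else 0).sum

private def SsumH (A₁ A₂ : Mould R G H) (Φ : Mould R G H) (w : List (G × H)) : R :=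
  ((sfacs w).map fun L => if okHead L then 0 else VS A₁ A₂ Φ L).sum

private def RunF (A₁ A₂ : Mould R G H) (Φ : Mould R G H) (r : List (G × H)) : R :=
  ∑ m ∈ Finset.range r.length, ∑ k ∈ Finset.range ((r.drop (m + 1)).length + 1),
    A₂ (flexLL (r.take (m + 1)) ((r.drop (m + 1)).take k)) *
      Fsum A₁ A₂ (!((r.drop (m + 1)).take k).isEmpty)
        (fun l => Φ (flexUR (r.take (m + 1)) ((r.drop (m + 1)).take k) ++ l))
        ((r.drop (m + 1)).drop k)

private lemma Ssum_split (A₁ A₂ : Mould R G H) (Φ : Mould R G H) (w : List (G × H)) :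
    Ssum A₁ A₂ Φ w = SsumT A₁ A₂ Φ w + SsumH A₁ A₂ Φ w := by
  unfold Ssum SsumT SsumH
  induction sfacs w with
  | nil => simp
  | cons L Ls ih =>
      simp only [List.map_cons, List.sum_cons, ih]
      split <;> ring

private lemma VF_cons (A₁ A₂ Φ : Mould R G H) (t) (L) :
    VF A₁ A₂ Φ (t :: L) = coeffF A₁ A₂ t * VF A₁ A₂ (fun l => Φ (blockArg t ++ l)) L := by
  simp only [VF, List.flatMap_cons, List.map_cons, List.prod_cons]
  ring

private lemma VS_cons (A₁ A₂ Φ : Mould R G H) (t) (L) :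
    VS A₁ A₂ Φ (t :: L) = coeffS A₁ A₂ t * VS A₁ A₂ (fun l => Φ (letterArg t :: l)) L := by
  simp only [VS, List.map_cons, List.prod_cons]
  ring

private lemma Fsum_nil (A₁ A₂ : Mould R G H) (f : Bool) (Φ : Mould R G H) :
    Fsum A₁ A₂ f Φ [] = Φ [] := by
  rw [Fsum, facs]
  simp [VF]

private lemma Ssum_nil (A₁ A₂ Φ : Mould R G H) : Ssum A₁ A₂ Φ [] = Φ [] := by
  rw [Ssum, sfacs]; simp [VS]

private lemma SsumT_nil (A₁ A₂ Φ : Mould R G H) : SsumT A₁ A₂ Φ [] = Φ [] := by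
  rw [SsumT, sfacs]; simp [okHead, VS]

private lemma SsumH_nil (A₁ A₂ Φ : Mould R G H) : SsumH A₁ A₂ Φ [] = 0 := by
  rw [SsumH, sfacs]; simp [okHead]

private lemma RunF_nil (A₁ A₂ Φ : Mould R G H) : RunF A₁ A₂ Φ [] = 0 := by
  simp [RunF]

private lemma Fsum_cons (A₁ A₂ : Mould R G H) (f : Bool) (Φ : Mould R G H) (x : G × H)
    (xs : List (G × H)) :
    Fsum A₁ A₂ f Φ (x :: xs) =
      ∑ i ∈ Finset.range ((x :: xs).length + 1),
        if i = 0 ∧ f = false then 0 else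
          ∑ j ∈ Finset.range (((x :: xs).drop i).length),
            ∑ k ∈ Finset.range ((((x :: xs).drop i).drop (j + 1)).length + 1),
              coeffF A₁ A₂ ((x :: xs).take i, ((x :: xs).drop i).take (j + 1),
                  (((x :: xs).drop i).drop (j + 1)).take k) *
                Fsum A₁ A₂ (!((((x :: xs).drop i).drop (j + 1)).take k).isEmpty)
                  (fun l => Φ (blockArg ((x :: xs).take i, ((x :: xs).drop i).take (j + 1),
                      (((x :: xs).drop i).drop (j + 1)).take k) ++ l))
                  ((((x :: xs).drop i).drop (j + 1)).drop k) := by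
  rw [Fsum, facs, sum_map_flatMap, listSum_range]
  refine Finset.sum_congr rfl fun i _ => ?_
  by_cases hP : i = 0 ∧ f = false
  · rw [if_pos hP, if_pos hP]; simp
  · rw [if_neg hP, if_neg hP, sum_map_flatMap, listSum_range]
    refine Finset.sum_congr rfl fun j _ => ?_
    rw [sum_map_flatMap, listSum_range]
    refine Finset.sum_congr rfl fun k _ => ?_
    rw [List.map_map]
    simp only [Function.comp_def, VF_cons]
    rw [List.sum_map_mul_left]
    rfl

private lemma Ssum_cons (A₁ A₂ Φ : Mould R G H) (x : G × H) (xs : List (G × H)) :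
    Ssum A₁ A₂ Φ (x :: xs) =
      ∑ i ∈ Finset.range (xs.length + 1),
        ∑ k ∈ Finset.range (((x :: xs).drop (i + 1)).length + 1),
          coeffS A₁ A₂ ((x :: xs).take i, (x :: xs).getD i x,
              ((x :: xs).drop (i + 1)).take k) *
            Ssum A₁ A₂ (fun l => Φ (letterArg ((x :: xs).take i, (x :: xs).getD i x,
                ((x :: xs).drop (i + 1)).take k) :: l)) (((x :: xs).drop (i + 1)).drop k) := by
  rw [Ssum, sfacs, sum_map_flatMap, listSum_range]
  refine Finset.sum_congr rfl fun i _ => ?_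
  rw [sum_map_flatMap, listSum_range]
  refine Finset.sum_congr rfl fun k _ => ?_
  rw [List.map_map]
  simp only [Function.comp_def, VS_cons]
  rw [List.sum_map_mul_left]
  rfl

private lemma SsumT_cons (A₁ A₂ Φ : Mould R G H) (x : G × H) (xs : List (G × H)) :
    SsumT A₁ A₂ Φ (x :: xs) =
      ∑ i ∈ Finset.range (xs.length + 1),
        if i = 0 then 0 else
        ∑ k ∈ Finset.range (((x :: xs).drop (i + 1)).length + 1),
          coeffS A₁ A₂ ((x :: xs).take i, (x :: xs).getD i x,
              ((x :: xs).drop (i + 1)).take k) *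
            Ssum A₁ A₂ (fun l => Φ (letterArg ((x :: xs).take i, (x :: xs).getD i x,
                ((x :: xs).drop (i + 1)).take k) :: l)) (((x :: xs).drop (i + 1)).drop k) := by
  rw [SsumT, sfacs, sum_map_flatMap, listSum_range]
  refine Finset.sum_congr rfl fun i _ => ?_
  rw [sum_map_flatMap, listSum_range]
  by_cases h0 : i = 0
  · subst h0
    simp [okHead, List.map_map, Function.comp_def]
  · rw [if_neg h0]
    obtain ⟨m, rfl⟩ := Nat.exists_eq_succ_of_ne_zero h0
    refine Finset.sum_congr rfl fun k _ => ?_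
    rw [List.map_map]
    simp only [Function.comp_def, okHead, List.take_succ_cons, List.isEmpty_cons,
      Bool.not_false, if_true, VS_cons]
    rw [List.sum_map_mul_left]
    rfl

private lemma SsumH_cons (A₁ A₂ : Mould R G H) (h₁ : A₁ [] = 1) (Φ : Mould R G H)
    (x : G × H) (xs : List (G × H)) :
    SsumH A₁ A₂ Φ (x :: xs) =
      ∑ k ∈ Finset.range (xs.length + 1),
        A₂ ((xs.take k).map fun p => (p.1, p.2 - x.2)) *
          Ssum A₁ A₂ (fun l => Φ ((x.1 + uSum (xs.take k), x.2) :: l)) (xs.drop k) := by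
  rw [SsumH, sfacs, sum_map_flatMap, listSum_range]
  rw [Finset.sum_eq_single 0]
  · rw [sum_map_flatMap, listSum_range]
    simp only [List.take_zero, List.drop_succ_cons, List.drop_zero, List.getD_cons_zero]
    refine Finset.sum_congr rfl fun k _ => ?_
    rw [List.map_map]
    simp only [Function.comp_def, okHead, List.isEmpty_nil, Bool.not_true,
      Bool.false_eq_true, if_false, VS_cons]
    rw [List.sum_map_mul_left]
    have h1 : coeffS A₁ A₂ ([], x, xs.take k) =
        A₂ ((xs.take k).map fun p => (p.1, p.2 - x.2)) := by
      simp [coeffS, h₁]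
    have h2 : letterArg ([], x, xs.take k) = (x.1 + uSum (xs.take k), x.2) := by
      simp [letterArg, uSum]
    rw [h1, h2]
    rfl
  · intro i _ hi0
    obtain ⟨m, rfl⟩ := Nat.exists_eq_succ_of_ne_zero hi0
    rw [sum_map_flatMap, listSum_range]
    refine Finset.sum_eq_zero fun k _ => ?_
    rw [List.map_map]
    simp [Function.comp_def, okHead]
  · intro h
    simp at h

private lemma RunF_cons (A₁ A₂ Φ : Mould R G H) (y : G × H) (r : List (G × H)) :
    RunF A₁ A₂ Φ (y :: r) =
      RunF A₁ A₂ (fun l => Φ (y :: l)) r +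
      ∑ k ∈ Finset.range (r.length + 1),
        A₂ ((r.take k).map fun p => (p.1, p.2 - y.2)) *
          Fsum A₁ A₂ (!(r.take k).isEmpty)
            (fun l => Φ ((y.1 + uSum (r.take k), y.2) :: l)) (r.drop k) := by
  unfold RunF
  rw [List.length_cons, Finset.sum_range_succ']
  congr 1
  ·
    refine Finset.sum_congr rfl fun m hm => ?_
    have hne : r.take (m + 1) ≠ [] := by
      apply List.ne_nil_of_length_pos
      rw [List.length_take]
      have hm' := Finset.mem_range.mp hm
      omega
    simp only [List.take_succ_cons, List.drop_succ_cons, flexLL, lastV_cons_ne _ hne,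
      flexUR_cons_ne _ _ hne, List.cons_append]

private lemma runPart (A₁ A₂ : Mould R G H) (a : List (G × H)) (ℓ : G × H)
    (r : List (G × H)) (Φ : Mould R G H) :
    (∑ j ∈ Finset.range r.length,
      ∑ k ∈ Finset.range ((r.drop (j + 1)).length + 1),
        coeffF A₁ A₂ (a, ℓ :: r.take (j + 1), (r.drop (j + 1)).take k) *
          Fsum A₁ A₂ (!((r.drop (j + 1)).take k).isEmpty)
            (fun l => Φ (blockArg (a, ℓ :: r.take (j + 1), (r.drop (j + 1)).take k) ++ l))
            ((r.drop (j + 1)).drop k)) =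
      A₁ (a.map fun p => (p.1, p.2 - ℓ.2)) *
        RunF A₁ A₂ (fun l => Φ ((uSum a + ℓ.1, ℓ.2) :: l)) r := by
  unfold RunF
  rw [Finset.mul_sum]
  refine Finset.sum_congr rfl fun j hj => ?_
  rw [Finset.mul_sum]
  refine Finset.sum_congr rfl fun k _ => ?_
  have hne : r.take (j + 1) ≠ [] := by
    apply List.ne_nil_of_length_pos
    rw [List.length_take]
    have := Finset.mem_range.mp hj
    omega
  simp only [coeffF, blockArg, flexLR, flexLL, headV, lastV_cons_ne _ hne,
    flexUR_cons_ne _ _ hne, flexUL, List.cons_append]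
  ring

private lemma key (A₁ A₂ : Mould R G H) (h₁ : A₁ [] = 1) (h₂ : A₂ [] = 1)
    (x : G × H) (xs : List (G × H))
    (IHT : ∀ w : List (G × H), w.length ≤ xs.length →
      ∀ Φ : Mould R G H, Fsum A₁ A₂ true Φ w = Ssum A₁ A₂ Φ w)
    (IHF : ∀ w : List (G × H), w.length ≤ xs.length →
      ∀ Φ : Mould R G H, Fsum A₁ A₂ false Φ w = SsumT A₁ A₂ Φ w)
    (IHR : ∀ w : List (G × H), w.length ≤ xs.length →
      ∀ Φ : Mould R G H, RunF A₁ A₂ Φ w = SsumH A₁ A₂ Φ w)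
    (Φ : Mould R G H) (i : ℕ) (hi : i ≤ xs.length) :
    (∑ j ∈ Finset.range (((x :: xs).drop i).length),
      ∑ k ∈ Finset.range ((((x :: xs).drop i).drop (j + 1)).length + 1),
        coeffF A₁ A₂ ((x :: xs).take i, ((x :: xs).drop i).take (j + 1),
            (((x :: xs).drop i).drop (j + 1)).take k) *
          Fsum A₁ A₂ (!((((x :: xs).drop i).drop (j + 1)).take k).isEmpty)
            (fun l => Φ (blockArg ((x :: xs).take i, ((x :: xs).drop i).take (j + 1),
                (((x :: xs).drop i).drop (j + 1)).take k) ++ l))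
            ((((x :: xs).drop i).drop (j + 1)).drop k)) =
    ∑ k ∈ Finset.range (((x :: xs).drop (i + 1)).length + 1),
      coeffS A₁ A₂ ((x :: xs).take i, (x :: xs).getD i x, ((x :: xs).drop (i + 1)).take k) *
        Ssum A₁ A₂ (fun l => Φ (letterArg ((x :: xs).take i, (x :: xs).getD i x,
            ((x :: xs).drop (i + 1)).take k) :: l)) (((x :: xs).drop (i + 1)).drop k) := by
  have hi' : i < (x :: xs).length := by simp; omega
  have hdrop : (x :: xs).drop i = (x :: xs).getD i x :: (x :: xs).drop (i + 1) := by
    rw [List.getD_eq_getElem _ _ hi']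
    exact List.drop_eq_getElem_cons hi'
  set a := (x :: xs).take i with ha
  set ℓ := (x :: xs).getD i x with hℓ
  set r := (x :: xs).drop (i + 1) with hr
  have hrlen : r.length ≤ xs.length := by
    rw [hr]; simp
  rw [hdrop]
  simp only [List.take_succ_cons, List.drop_succ_cons, List.length_cons]
  rw [Finset.sum_range_succ']
  rw [runPart A₁ A₂ a ℓ r Φ, IHR r hrlen]
  rw [show A₁ (a.map fun p => (p.1, p.2 - ℓ.2)) *
        SsumH A₁ A₂ (fun l => Φ ((uSum a + ℓ.1, ℓ.2) :: l)) r =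
      ∑ k ∈ Finset.range (r.length + 1),
        (if k = 0 then A₁ (a.map fun p => (p.1, p.2 - ℓ.2)) *
          SsumH A₁ A₂ (fun l => Φ ((uSum a + ℓ.1, ℓ.2) :: l)) r else 0) from by
    rw [Finset.sum_ite_eq' (Finset.range (r.length + 1)) 0]
    simp]
  simp only [List.take_zero, List.drop_zero]
  rw [← Finset.sum_add_distrib]
  refine Finset.sum_congr rfl fun k hk => ?_
  cases k with
  | zero =>
      rw [if_pos rfl]
      simp only [List.take_zero, List.drop_zero]
      have hE : (([] : List (G × H)).isEmpty) = true := rfl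
      rw [hE, Bool.not_true, IHF r hrlen, Ssum_split]
      simp only [coeffF, coeffS, flexLR, flexLL, headV, lastV, blockArg, flexUL, flexUR,
        letterArg, List.singleton_append, List.map_nil, h₂, mul_one, uSum, List.sum_nil,
        add_zero]
      ring
  | succ k' =>
      rw [if_neg (Nat.succ_ne_zero k')]
      have hne : r.take (k' + 1) ≠ [] := by
        apply List.ne_nil_of_length_pos
        rw [List.length_take]
        have := Finset.mem_range.mp hk
        omega
      have hE : (r.take (k' + 1)).isEmpty = false := by simpa using hne
      rw [hE, Bool.not_false]
      have hlen : (r.drop (k' + 1)).length ≤ xs.length := by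
        rw [List.length_drop]
        exact le_trans (Nat.sub_le _ _) hrlen
      rw [IHT _ hlen, zero_add]
      simp only [coeffF, coeffS, flexLR, flexLL, headV, lastV, blockArg, flexUL, flexUR,
        letterArg, List.singleton_append, add_assoc]

private lemma mainLemma (A₁ A₂ : Mould R G H) (h₁ : A₁ [] = 1) (h₂ : A₂ [] = 1) :
    ∀ (n : ℕ) (w : List (G × H)), w.length ≤ n →
      (∀ Φ : Mould R G H, Fsum A₁ A₂ true Φ w = Ssum A₁ A₂ Φ w) ∧
      (∀ Φ : Mould R G H, Fsum A₁ A₂ false Φ w = SsumT A₁ A₂ Φ w) ∧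
      (∀ Φ : Mould R G H, RunF A₁ A₂ Φ w = SsumH A₁ A₂ Φ w) := by
  intro n
  induction n with
  | zero =>
      intro w hw
      obtain rfl : w = [] := List.length_eq_zero_iff.mp (Nat.le_zero.mp hw)
      exact ⟨fun Φ => by rw [Fsum_nil, Ssum_nil],
             fun Φ => by rw [Fsum_nil, SsumT_nil],
             fun Φ => by rw [RunF_nil, SsumH_nil]⟩
  | succ n ih =>
      intro w hw
      match w with
      | [] =>
          exact ⟨fun Φ => by rw [Fsum_nil, Ssum_nil],
                 fun Φ => by rw [Fsum_nil, SsumT_nil],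
                 fun Φ => by rw [RunF_nil, SsumH_nil]⟩
      | x :: xs =>
          have hxs : xs.length ≤ n := by simpa using hw
          have IHT : ∀ w' : List (G × H), w'.length ≤ xs.length → ∀ Φ : Mould R G H,
              Fsum A₁ A₂ true Φ w' = Ssum A₁ A₂ Φ w' :=
            fun w' h => (ih w' (h.trans hxs)).1
          have IHF : ∀ w' : List (G × H), w'.length ≤ xs.length → ∀ Φ : Mould R G H,
              Fsum A₁ A₂ false Φ w' = SsumT A₁ A₂ Φ w' :=
            fun w' h => (ih w' (h.trans hxs)).2.1
          have IHR : ∀ w' : List (G × H), w'.length ≤ xs.length → ∀ Φ : Mould R G H,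
              RunF A₁ A₂ Φ w' = SsumH A₁ A₂ Φ w' :=
            fun w' h => (ih w' (h.trans hxs)).2.2
          refine ⟨?_, ?_, ?_⟩
          · intro Φ
            rw [Fsum_cons, Ssum_cons, List.length_cons, Finset.sum_range_succ]
            rw [if_neg (by simp)]
            rw [show (((x :: xs).drop (xs.length + 1)).length) = 0 from by simp,
              Finset.range_zero, Finset.sum_empty, add_zero]
            refine Finset.sum_congr rfl fun i hi => ?_
            rw [if_neg (by simp)]
            exact key A₁ A₂ h₁ h₂ x xs IHT IHF IHR Φ i
              (Nat.lt_succ_iff.mp (Finset.mem_range.mp hi))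
          · intro Φ
            rw [Fsum_cons, SsumT_cons, List.length_cons, Finset.sum_range_succ]
            rw [if_neg (by simp)]
            rw [show (((x :: xs).drop (xs.length + 1)).length) = 0 from by simp,
              Finset.range_zero, Finset.sum_empty, add_zero]
            refine Finset.sum_congr rfl fun i hi => ?_
            by_cases h0 : i = 0
            · subst h0
              rw [if_pos ⟨rfl, rfl⟩, if_pos rfl]
            · rw [if_neg (by simp [h0]), if_neg h0]
              exact key A₁ A₂ h₁ h₂ x xs IHT IHF IHR Φ i
                (Nat.lt_succ_iff.mp (Finset.mem_range.mp hi))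
          · intro Φ
            rw [RunF_cons, SsumH_cons A₁ A₂ h₁, IHR xs le_rfl]
            rw [show SsumH A₁ A₂ (fun l => Φ (x :: l)) xs =
                ∑ k ∈ Finset.range (xs.length + 1),
                  (if k = 0 then SsumH A₁ A₂ (fun l => Φ (x :: l)) xs else 0) from by
              rw [Finset.sum_ite_eq' (Finset.range (xs.length + 1)) 0]
              simp]
            rw [← Finset.sum_add_distrib]
            refine Finset.sum_congr rfl fun k hk => ?_
            cases k with
            | zero =>
                rw [if_pos rfl]
                simp only [List.take_zero, List.drop_zero, List.isEmpty_nil, Bool.not_true]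
                rw [IHF xs le_rfl, Ssum_split]
                simp only [List.map_nil, h₂, one_mul, uSum, List.sum_nil, add_zero,
                  Prod.mk.eta]
                ring
            | succ k' =>
                rw [if_neg (Nat.succ_ne_zero k')]
                have hne : xs.take (k' + 1) ≠ [] := by
                  apply List.ne_nil_of_length_pos
                  rw [List.length_take]
                  have := Finset.mem_range.mp hk
                  omega
                have hE : (xs.take (k' + 1)).isEmpty = false := by simpa using hne
                rw [hE, Bool.not_false]
                have hlen : (xs.drop (k' + 1)).length ≤ xs.length := by
                  rw [List.length_drop]
                  exact Nat.sub_le _ _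
                rw [IHT _ hlen, zero_add]

/-- simplified expression of `gaxit` as a sum over factorizations
whose middle blocks are single letters. -/
theorem gaxit_simple (A₁ A₂ B : Mould R G H) (h₁ : A₁ [] = 1) (h₂ : A₂ [] = 1)
    (w : List (G × H)) (hw : w ≠ []) :
    gaxit A₁ A₂ B w =
      ((sfacs w).map fun L =>
        B (L.map fun t => (uSum t.1 + t.2.1.1 + uSum t.2.2, t.2.1.2)) *
          (L.map fun t =>
            A₁ (t.1.map fun p => (p.1, p.2 - t.2.1.2)) *
              A₂ (t.2.2.map fun p => (p.1, p.2 - t.2.1.2))).prod).sum := by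
  cases w with
  | nil => exact absurd rfl hw
  | cons x xs =>
      exact (mainLemma A₁ A₂ h₁ h₂ (x :: xs).length (x :: xs) le_rfl).1 B

end Flexion
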